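/- For the skew-symmetric matrix B̃ with B̃v = v × B (B ∈ ℝ³ constant, B ≠ 0) and any h with cos(h|B|/2) ≠ 0, the Cayley-type identity holds: (2/h)(e^{(h/2)B̃} - e^{-(h/2)B̃})(e^{(h/2)B̃} + e^{-(h/2)B̃})^{-1} = (tan(h|B|/2)/(h|B|/2)) · B̃. -/

import Mathlib

open Matrix NormedSpace

/-- The skew-symmetric matrix of the cross product with `B`. -/
def tildeB (B : Fin 3 → ℝ) : Matrix (Fin 3) (Fin 3) ℝ :=
  !![0, B 2, -(B 1); -(B 2), 0, B 0; B 1, -(B 0), 0]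

attribute [local instance] Matrix.linftyOpSemiNormedRing Matrix.linftyOpNormedRing
  Matrix.linftyOpNormedAlgebra

lemma dotProduct_self_pos' (B : Fin 3 → ℝ) (hB : B ≠ 0) : (0 : ℝ) < B ⬝ᵥ B := by
  rcases lt_or_eq_of_le (Finset.sum_nonneg fun i _ => mul_self_nonneg (B i) : (0:ℝ) ≤ B ⬝ᵥ B)
    with h | h
  · exact h
  · exact absurd (dotProduct_self_eq_zero.mp h.symm) hB

lemma tildeB_cube (B : Fin 3 → ℝ) :
    tildeB B * tildeB B * tildeB B = -((B ⬝ᵥ B) • tildeB B) := by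
  ext i j
  fin_cases i <;> fin_cases j <;>
    simp [tildeB, Matrix.mul_apply, Fin.sum_univ_three, dotProduct] <;> ring

lemma exp_smul_tildeB (B : Fin 3 → ℝ) (hB : B ≠ 0) (t : ℝ) :
    exp (t • tildeB B) =
      (1 : Matrix (Fin 3) (Fin 3) ℝ)
        + (Real.sin (t * Real.sqrt (B ⬝ᵥ B)) / Real.sqrt (B ⬝ᵥ B)) • tildeB B
        + ((1 - Real.cos (t * Real.sqrt (B ⬝ᵥ B))) / (B ⬝ᵥ B)) • (tildeB B * tildeB B) := by
  have hq : (0 : ℝ) < B ⬝ᵥ B := dotProduct_self_pos' B hB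
  set A := tildeB B with hA_def
  set c := Real.sqrt (B ⬝ᵥ B) with hc_def
  have hc : c ≠ 0 := (Real.sqrt_pos.mpr hq).ne'
  have hc2 : c ^ 2 = B ⬝ᵥ B := Real.sq_sqrt hq.le
  have hA3 : A * A * A = -((B ⬝ᵥ B) • A) := tildeB_cube B
  set E : ℝ → Matrix (Fin 3) (Fin 3) ℝ := fun s =>
    (1 : Matrix (Fin 3) (Fin 3) ℝ) + (Real.sin (s * c) / c) • A
      + ((1 - Real.cos (s * c)) / (B ⬝ᵥ B)) • (A * A) with hE_def
  have hAE : ∀ s : ℝ, A * E s = Real.cos (s * c) • A + (Real.sin (s * c) / c) • (A * A) := by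
    intro s
    rw [hE_def]
    simp only [mul_add, mul_one, mul_smul_comm]
    rw [← mul_assoc, hA3, smul_neg, smul_smul, div_mul_cancel₀ _ hq.ne']
    module
  have hg : ∀ s : ℝ, HasDerivAt (fun u : ℝ => exp (u • (-A)) * E u) 0 s := by
    intro s
    have hexp : HasDerivAt (fun u : ℝ => exp (u • (-A))) (exp (s • (-A)) * (-A)) s :=
      hasDerivAt_exp_smul_const (-A) s
    have hsin : HasDerivAt (fun u : ℝ => Real.sin (u * c) / c) (Real.cos (s * c)) s := by
      have := ((Real.hasDerivAt_sin (s * c)).comp s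
        ((hasDerivAt_id s).mul_const c)).div_const c
      refine this.congr_deriv ?_
      field_simp
    have hcosd : HasDerivAt (fun u : ℝ => (1 - Real.cos (u * c)) / (B ⬝ᵥ B))
        (Real.sin (s * c) / c) s := by
      have := (((hasDerivAt_const s (1:ℝ)).sub ((Real.hasDerivAt_cos (s * c)).comp s
        ((hasDerivAt_id s).mul_const c))).div_const (B ⬝ᵥ B))
      refine this.congr_deriv ?_
      rw [← hc2]
      field_simp
      ring
    have hE' : HasDerivAt E (Real.cos (s * c) • A + (Real.sin (s * c) / c) • (A * A)) s := by
      rw [hE_def]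
      refine HasDerivAt.congr_deriv
        (((hasDerivAt_const s (1 : Matrix (Fin 3) (Fin 3) ℝ)).add
          (hsin.smul_const A)).add (hcosd.smul_const (A * A))) ?_
      simp only [zero_add]
    have := hexp.mul hE'
    refine this.congr_deriv ?_
    rw [← hAE s, mul_assoc, neg_mul, mul_neg, neg_add_cancel]
  have hconst : exp (t • (-A)) * E t = 1 := by
    have h0 : exp ((0:ℝ) • (-A)) * E 0 = 1 := by
      simp [hE_def, exp_zero]
    have := is_const_of_deriv_eq_zero (𝕜 := ℝ)
      (f := fun u : ℝ => exp (u • (-A)) * E u)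
      (fun s => (hg s).differentiableAt) (fun s => (hg s).deriv) t 0
    exact this.trans h0
  have hcomm : exp (t • A) * exp (t • (-A)) = 1 := by
    rw [← Matrix.exp_add_of_commute _ _
      (by rw [smul_neg]; exact (Commute.refl (t • A)).neg_right)]
    rw [smul_neg, add_neg_cancel, exp_zero]
  have main : exp (t • A) = E t := by
    calc exp (t • A) = exp (t • A) * (exp (t • (-A)) * E t) := by rw [hconst, mul_one]
      _ = (exp (t • A) * exp (t • (-A))) * E t := by rw [mul_assoc]
      _ = E t := by rw [hcomm, one_mul]
  rw [main, hE_def]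

theorem cayley_tangent_identity (B : Fin 3 → ℝ) (hB : B ≠ 0) (h : ℝ) (hh : h ≠ 0)
    (hcos : Real.cos (h * Real.sqrt (B ⬝ᵥ B) / 2) ≠ 0) :
    (2 / h) •
        ((exp ((h/2) • tildeB B) - exp (-((h/2) • tildeB B))) *
          (exp ((h/2) • tildeB B) + exp (-((h/2) • tildeB B)))⁻¹) =
      (Real.tan (h * Real.sqrt (B ⬝ᵥ B) / 2) / (h * Real.sqrt (B ⬝ᵥ B) / 2)) •
        tildeB B := by
  have hq : (0 : ℝ) < B ⬝ᵥ B := dotProduct_self_pos' B hB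
  have e1 := exp_smul_tildeB B hB (h/2)
  have e2' := exp_smul_tildeB B hB (-(h/2))
  have e2 : exp (-((h/2) • tildeB B)) = exp ((-(h/2)) • tildeB B) := by rw [neg_smul]
  rw [← e2] at e2'
  have hA3 := tildeB_cube B
  set A := tildeB B with hA_def
  set c := Real.sqrt (B ⬝ᵥ B) with hc_def
  have hc : c ≠ 0 := (Real.sqrt_pos.mpr hq).ne'
  have hc2 : c ^ 2 = B ⬝ᵥ B := Real.sq_sqrt hq.le
  have hA4 : (A * A) * (A * A) = -((B ⬝ᵥ B) • (A * A)) := by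
    rw [← mul_assoc, hA3, neg_mul, smul_mul_assoc]
  set θ := h * c / 2 with hθ_def
  have hθc : h / 2 * c = θ := by rw [hθ_def]; ring
  have hθc' : -(h / 2) * c = -θ := by rw [hθ_def]; ring
  rw [hθc] at e1
  rw [hθc', Real.sin_neg, Real.cos_neg] at e2'
  clear hθc hθc' e2 hB
  clear_value A c θ
  generalize hqd : B ⬝ᵥ B = q at hq hc2 hA3 hA4 e1 e2'
  have hq0 : q ≠ 0 := hq.ne'
  have hsum : exp ((h/2) • A) + exp (-((h/2) • A)) =
      (2 : ℝ) • (1 : Matrix (Fin 3) (Fin 3) ℝ)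
        + (2 * (1 - Real.cos θ) / q) • (A * A) := by
    rw [e1, e2']; module
  have hdiff : exp ((h/2) • A) - exp (-((h/2) • A)) = (2 * Real.sin θ / c) • A := by
    rw [e1, e2']; module
  have hmul : ∀ x y : ℝ,
      ((2:ℝ) • (1 : Matrix (Fin 3) (Fin 3) ℝ) + x • (A*A)) *
        ((1/2:ℝ) • (1 : Matrix (Fin 3) (Fin 3) ℝ) - y • (A*A))
        = 1 + (x/2 - 2*y + x*y*q) • (A*A) := by
    intro x y
    have h4 : (x • (A*A)) * (y • (A*A)) = -((x*y*q) • (A*A)) := by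
      rw [smul_mul_assoc, mul_smul_comm, hA4, smul_neg, smul_neg, smul_smul, smul_smul,
        mul_assoc]
    rw [mul_sub, add_mul, add_mul, h4]
    simp only [smul_mul_assoc, mul_smul_comm, smul_smul, mul_one, one_mul]
    module
  set M : Matrix (Fin 3) (Fin 3) ℝ :=
    (1/2 : ℝ) • (1 : Matrix (Fin 3) (Fin 3) ℝ)
      - ((1 - Real.cos θ) / (2 * Real.cos θ * q)) • (A * A) with hM_def
  have hSM : (exp ((h/2) • A) + exp (-((h/2) • A))) * M = 1 := by
    rw [hsum, hM_def, hmul]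
    have hz : 2*(1 - Real.cos θ)/q/2 - 2*((1 - Real.cos θ)/(2*Real.cos θ*q))
        + (2*(1 - Real.cos θ)/q)*((1 - Real.cos θ)/(2*Real.cos θ*q))*q = 0 := by
      field_simp
      ring
    rw [hz, zero_smul, add_zero]
  have hinv : (exp ((h/2) • A) + exp (-((h/2) • A)))⁻¹ = M :=
    Matrix.inv_eq_right_inv hSM
  have h3 : ∀ s y : ℝ, (s • A) * ((1/2:ℝ) • (1 : Matrix (Fin 3) (Fin 3) ℝ) - y • (A*A))
      = (s/2 + s*y*q) • A := by
    intro s y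
    have h5 : (s • A) * (y • (A*A)) = -((s*y*q) • A) := by
      rw [smul_mul_assoc, mul_smul_comm, ← mul_assoc, hA3, smul_neg, smul_neg, smul_smul,
        smul_smul, mul_assoc]
    rw [mul_sub, h5]
    simp only [smul_mul_assoc, mul_smul_comm, smul_smul, mul_one]
    module
  rw [hinv, hdiff, hM_def, h3, smul_smul]
  congr 1
  rw [hθ_def] at hcos ⊢
  rw [Real.tan_eq_sin_div_cos]
  field_simp
  ring
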